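/- Let a < 0 < b, let β₁ > β₂ > 0, set D = b/β₁ − a/β₂ and L = ln(β₁/β₂), and let E > (b/β₁)·L. Define c₁ = (E − (a/β₂)·L)/(β₁·D) and c₂ = (E − (b/β₁)·L)/(β₂·D), and let f : ℝ → [0,∞) be f(x) = c₁ for 0 ≤ x < b, f(x) = c₂ for a < x < 0, and f(x) = 0 otherwise. Then c₁ ≥ 0, c₂ ≥ 0, ∫_ℝ f(x) dx = E, and for every measurable g : ℝ → [0,∞) with ∫_ℝ g(x) dx = E one has (1/(b−a))·∫_a^b (1 − e^{−α_x g(x)}) dx ≤ (1/(b−a))·∫_a^b (1 − e^{−α_x f(x)}) dx, where α_x = β₁ for x ≥ 0 and α_x = β₂ for x < 0. -/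

import Mathlib

open MeasureTheory

/-- Tangent-line inequality for the concave function `s ↦ 1 - exp (-(α * s))`. -/
lemma tangent_ineq (α t s : ℝ) :
    1 - Real.exp (-(α * s)) ≤
      1 - Real.exp (-(α * t)) + α * Real.exp (-(α * t)) * (s - t) := by
  have h := Real.add_one_le_exp (-(α * (s - t)))
  have hp := (Real.exp_pos (-(α * t))).le
  have he : Real.exp (-(α * s)) = Real.exp (-(α * t)) * Real.exp (-(α * (s - t))) := by
    rw [← Real.exp_add]; ring_nf
  nlinarith [mul_le_mul_of_nonneg_left h hp]

/-- (Example 4, large budget.) For the uniform target density on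
`(a,b)` (`a < 0 < b`) and the two-rate exponential detection function with rate `β₁` on
`[0,∞)` and `β₂` on `(-∞,0)` (`β₁ > β₂ > 0`), when `E > (b/β₁)·ln(β₁/β₂)` the two-level
allocation `f` (equal to `c₁` on `[0,b)` and `c₂` on `(a,0)`) is feasible and maximizes the
subjective detection probability among measurable nonnegative allocations of total cost `E`. -/
theorem uniform_two_rate_optimal_large_budget
    (a b β₁ β₂ E : ℝ) (ha : a < 0) (hb : 0 < b)
    (hβ₂ : 0 < β₂) (hβ : β₂ < β₁)
    (D L c₁ c₂ : ℝ)
    (hD : D = b / β₁ - a / β₂) (hL : L = Real.log (β₁ / β₂))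
    (hE : b / β₁ * L < E)
    (hc₁ : c₁ = (E - a / β₂ * L) / (β₁ * D))
    (hc₂ : c₂ = (E - b / β₁ * L) / (β₂ * D))
    (f : ℝ → ℝ)
    (hf : ∀ x, f x = if 0 ≤ x ∧ x < b then c₁ else if a < x ∧ x < 0 then c₂ else 0) :
    0 ≤ c₁ ∧ 0 ≤ c₂ ∧ (∫ x, f x) = E ∧
    ∀ g : ℝ → ℝ, Measurable g → (∀ x, 0 ≤ g x) → (∫ x, g x) = E →
      (1 / (b - a)) * ∫ x in a..b, (1 - Real.exp (-((if 0 ≤ x then β₁ else β₂) * g x))) ≤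
        (1 / (b - a)) * ∫ x in a..b, (1 - Real.exp (-((if 0 ≤ x then β₁ else β₂) * f x))) := by
  have hβ₁ : 0 < β₁ := hβ₂.trans hβ
  have hab : a < b := ha.trans hb
  have hL0 : 0 < L := by
    rw [hL]; exact Real.log_pos ((one_lt_div hβ₂).mpr hβ)
  have haneg : a / β₂ < 0 := div_neg_of_neg_of_pos ha hβ₂
  have hbpos : 0 < b / β₁ := div_pos hb hβ₁
  have hD0 : 0 < D := by rw [hD]; linarith
  have hE0 : 0 < E := lt_trans (mul_pos hbpos hL0) hE
  have hc₂0 : 0 ≤ c₂ := by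
    rw [hc₂]
    exact div_nonneg (by linarith) (by positivity)
  have hc₁0 : 0 ≤ c₁ := by
    have : a / β₂ * L < 0 := mul_neg_of_neg_of_pos haneg hL0
    rw [hc₁]
    exact div_nonneg (by linarith) (by positivity)
  have hβ₁ne : β₁ ≠ 0 := hβ₁.ne'
  have hβ₂ne : β₂ ≠ 0 := hβ₂.ne'
  have hDne : D ≠ 0 := hD0.ne'
  -- key relation between the two levels
  have hkey : β₁ * c₁ = β₂ * c₂ + L := by
    rw [hc₁, hc₂]
    field_simp
    rw [hD]
    field_simp
    ring
  -- equal marginal values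
  set lam : ℝ := β₂ * Real.exp (-(β₂ * c₂)) with hlamdef
  have hlam0 : 0 < lam := mul_pos hβ₂ (Real.exp_pos _)
  have hexpne : Real.exp (β₂ * c₂) ≠ 0 := (Real.exp_pos _).ne'
  have hlam1 : β₁ * Real.exp (-(β₁ * c₁)) = lam := by
    have h1 : Real.exp (β₁ * c₁) = Real.exp (β₂ * c₂) * (β₁ / β₂) := by
      rw [hkey, Real.exp_add, hL, Real.exp_log (div_pos hβ₁ hβ₂)]
    rw [hlamdef, Real.exp_neg, Real.exp_neg, h1]
    field_simp
  -- integral of f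
  have hf_eq : f = (Set.Ico (0:ℝ) b).indicator (fun _ => c₁) +
      (Set.Ioo a 0).indicator (fun _ => c₂) := by
    funext x
    simp only [Pi.add_apply, Set.indicator_apply, Set.mem_Ico, Set.mem_Ioo, hf]
    by_cases h1 : 0 ≤ x ∧ x < b
    · have h2 : ¬(a < x ∧ x < 0) := fun h => absurd h.2 (not_lt.mpr h1.1)
      simp [h1, h2]
    · simp [h1]
  have hind1 : Integrable ((Set.Ico (0:ℝ) b).indicator (fun _ => c₁)) := by
    rw [integrable_indicator_iff measurableSet_Ico]
    exact (integrableOn_const_iff).mpr (Or.inr (by rw [Real.volume_Ico]; exact ENNReal.ofReal_lt_top))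
  have hind2 : Integrable ((Set.Ioo a 0).indicator (fun _ => c₂)) := by
    rw [integrable_indicator_iff measurableSet_Ioo]
    exact (integrableOn_const_iff).mpr (Or.inr (by rw [Real.volume_Ioo]; exact ENNReal.ofReal_lt_top))
  have hfint : Integrable f := by rw [hf_eq]; exact hind1.add hind2
  have hfE : (∫ x, f x) = E := by
    rw [hf_eq]
    simp only [Pi.add_apply]
    rw [integral_add hind1 hind2, integral_indicator_const _ measurableSet_Ico,
      integral_indicator_const _ measurableSet_Ioo, Real.volume_real_Ico_of_le (by linarith),
      Real.volume_real_Ioo_of_le (by linarith)]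
    simp only [smul_eq_mul]
    rw [hc₁, hc₂]
    field_simp
    rw [hD]
    field_simp
    ring
  refine ⟨hc₁0, hc₂0, hfE, ?_⟩
  intro g hgm hg0 hgE
  have hgi : Integrable g := by
    by_contra h
    rw [integral_undef h] at hgE
    linarith
  set α : ℝ → ℝ := fun x => if 0 ≤ x then β₁ else β₂ with hα
  have hαm : Measurable α :=
    Measurable.ite (measurableSet_le measurable_const measurable_id)
      measurable_const measurable_const
  have hαpos : ∀ x, 0 < α x := by
    intro x; simp only [hα]; split_ifs <;> [exact hβ₁; exact hβ₂]
  have hfm : Measurable f := by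
    have : f = fun x => if x ∈ Set.Ico (0:ℝ) b then c₁
        else if x ∈ Set.Ioo a 0 then c₂ else 0 := by
      funext x; simp [hf, Set.mem_Ico, Set.mem_Ioo]
    rw [this]
    exact Measurable.ite measurableSet_Ico measurable_const
      (Measurable.ite measurableSet_Ioo measurable_const measurable_const)
  have hf0 : ∀ x, 0 ≤ f x := by
    intro x; rw [hf]; split_ifs <;> simp [hc₁0, hc₂0]
  -- boundedness of the detection integrands
  have hIoo_fin : volume (Set.Ioo a b) ≠ ⊤ := by
    rw [Real.volume_Ioo]; exact ENNReal.ofReal_ne_top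
  have hbdd : ∀ u : ℝ → ℝ, Measurable u → (∀ x, 0 ≤ u x) →
      IntegrableOn (fun x => 1 - Real.exp (-(α x * u x))) (Set.Ioo a b) := by
    intro u hum hu0
    refine Measure.integrableOn_of_bounded (M := 1) hIoo_fin
      ((measurable_const.sub ((hαm.mul hum).neg.exp))).aestronglyMeasurable ?_
    · filter_upwards with x
      have h1 : 0 ≤ α x * u x := mul_nonneg (hαpos x).le (hu0 x)
      have h2 : Real.exp (-(α x * u x)) ≤ 1 := Real.exp_le_one_iff.mpr (by linarith)
      have h3 : 0 < Real.exp (-(α x * u x)) := Real.exp_pos _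
      rw [Real.norm_eq_abs, abs_le]
      constructor <;> linarith
  have hFg := hbdd g hgm hg0
  have hFf := hbdd f hfm hf0
  -- f integrates to E over Ioo a b
  have hfE' : (∫ x in Set.Ioo a b, f x) = E := by
    rw [setIntegral_eq_integral_of_forall_compl_eq_zero, hfE]
    intro x hx
    rw [hf]
    simp only [Set.mem_Ioo, not_and_or, not_lt] at hx
    rcases hx with hx | hx
    · rw [if_neg (fun h => absurd hx (not_le.mpr (lt_of_lt_of_le ha h.1))),
        if_neg (fun h => absurd hx (not_le.mpr h.1))]
    · rw [if_neg (fun h => absurd h.2 (not_lt.mpr hx)),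
        if_neg (fun h => absurd h.2 (not_lt.mpr (le_trans (le_of_lt hb) hx)))]
  have hgle : (∫ x in Set.Ioo a b, g x) ≤ E := by
    rw [← hgE]
    exact setIntegral_le_integral hgi (Filter.Eventually.of_forall hg0)
  -- pointwise tangent comparison on Ioo a b
  have hpt : ∀ x ∈ Set.Ioo a b,
      1 - Real.exp (-(α x * g x)) + lam * f x - lam * g x ≤
        1 - Real.exp (-(α x * f x)) := by
    intro x hx
    obtain ⟨hxa, hxb⟩ := hx
    by_cases hx0 : 0 ≤ x
    · have hfx : f x = c₁ := by rw [hf, if_pos ⟨hx0, hxb⟩]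
      have hαx : α x = β₁ := if_pos hx0
      have h1 := tangent_ineq β₁ c₁ (g x)
      rw [hlam1] at h1
      have h2 : lam * (g x - c₁) = lam * g x - lam * c₁ := by ring
      rw [hαx, hfx]
      linarith
    · have hfx : f x = c₂ := by
        rw [hf, if_neg (fun h => hx0 h.1), if_pos ⟨hxa, not_le.mp hx0⟩]
      have hαx : α x = β₂ := if_neg hx0
      have h1 := tangent_ineq β₂ c₂ (g x)
      rw [← hlamdef] at h1
      have h2 : lam * (g x - c₂) = lam * g x - lam * c₂ := by ring
      rw [hαx, hfx]
      linarith
  -- integrate the pointwise inequality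
  have hfr : IntegrableOn (fun x => lam * f x) (Set.Ioo a b) :=
    (hfint.restrict (s := Set.Ioo a b)).const_mul lam
  have hgr : IntegrableOn (fun x => lam * g x) (Set.Ioo a b) :=
    (hgi.restrict (s := Set.Ioo a b)).const_mul lam
  have hmono : (∫ x in Set.Ioo a b, (1 - Real.exp (-(α x * g x)) + lam * f x - lam * g x)) ≤
      ∫ x in Set.Ioo a b, (1 - Real.exp (-(α x * f x))) := by
    apply setIntegral_mono_on ((hFg.add hfr).sub hgr) hFf measurableSet_Ioo
    intro x hx
    exact hpt x hx
  have hsplit : (∫ x in Set.Ioo a b, (1 - Real.exp (-(α x * g x)) + lam * f x - lam * g x)) =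
      (∫ x in Set.Ioo a b, (1 - Real.exp (-(α x * g x)))) +
        lam * (∫ x in Set.Ioo a b, f x) - lam * (∫ x in Set.Ioo a b, g x) := by
    have h1 : IntegrableOn (fun x => 1 - Real.exp (-(α x * g x)) + lam * f x)
        (Set.Ioo a b) := hFg.add hfr
    rw [integral_sub h1 hgr, integral_add hFg hfr,
      integral_const_mul, integral_const_mul]
  have hmain : (∫ x in Set.Ioo a b, (1 - Real.exp (-(α x * g x)))) ≤
      ∫ x in Set.Ioo a b, (1 - Real.exp (-(α x * f x))) := by
    rw [hsplit, hfE'] at hmono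
    have h2 : lam * (∫ x in Set.Ioo a b, g x) ≤ lam * E :=
      mul_le_mul_of_nonneg_left hgle hlam0.le
    linarith
  -- convert to interval integrals and conclude
  have hIg : (∫ x in a..b, (1 - Real.exp (-(α x * g x)))) =
      ∫ x in Set.Ioo a b, (1 - Real.exp (-(α x * g x))) := by
    rw [intervalIntegral.integral_of_le hab.le, integral_Ioc_eq_integral_Ioo]
  have hIf : (∫ x in a..b, (1 - Real.exp (-(α x * f x)))) =
      ∫ x in Set.Ioo a b, (1 - Real.exp (-(α x * f x))) := by
    rw [intervalIntegral.integral_of_le hab.le, integral_Ioc_eq_integral_Ioo]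
  have hba : (0:ℝ) ≤ 1 / (b - a) := by
    have : (0:ℝ) < b - a := by linarith
    positivity
  apply mul_le_mul_of_nonneg_left _ hba
  show (∫ x in a..b, (1 - Real.exp (-(α x * g x)))) ≤
      ∫ x in a..b, (1 - Real.exp (-(α x * f x)))
  rw [hIg, hIf]
  exact hmain
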